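/- Let {x_j} and {y_j} be strongly disjoint normalized tight frames of Hilbert spaces H and K (i.e., {x_j ⊕ y_j} is a normalized tight frame of H ⊕ K). Then for any α, β ∈ ℂ with |α|² + |β|² = 1, and any isometric identifications, the sequence {αx_j + βy_j} (viewed via unitaries H ≅ K ≅ ℓ² when H = K = ℓ²) is a normalized tight frame; in particular when H = K, Σ_j |⟨z, αx_j + βy_j⟩|² = ||z||² for all z ∈ H. -/

import Mathlib

open scoped InnerProductSpace

lemma norm_add_sq_complex (u v : ℂ) :
    ‖u + v‖ ^ 2 = ‖u‖ ^ 2 + ‖v‖ ^ 2 + 2 * (u * (starRingEnd ℂ) v).re := by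
  have := Complex.normSq_add u v
  simpa [Complex.normSq_eq_norm_sq] using this

/-- If `{x_j}` and `{y_j}` are strongly disjoint normalized tight frames of a Hilbert space
`H` and `|α|² + |β|² = 1`, then `{α x_j + β y_j}` is a normalized tight frame of `H`. -/
theorem stmt14 {H : Type*} [NormedAddCommGroup H] [InnerProductSpace ℂ H] [CompleteSpace H]
    (x y : ℕ → H)
    (hx : ∀ v : H, ∑' j, ‖⟪v, x j⟫_ℂ‖ ^ 2 = ‖v‖ ^ 2)
    (hy : ∀ v : H, ∑' j, ‖⟪v, y j⟫_ℂ‖ ^ 2 = ‖v‖ ^ 2)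
    (hd1 : ∀ v : H, HasSum (fun j => ⟪x j, v⟫_ℂ • y j) 0)
    (hd2 : ∀ v : H, HasSum (fun j => ⟪y j, v⟫_ℂ • x j) 0)
    (α β : ℂ) (hαβ : ‖α‖ ^ 2 + ‖β‖ ^ 2 = 1) :
    ∀ z : H, ∑' j, ‖⟪z, α • x j + β • y j⟫_ℂ‖ ^ 2 = ‖z‖ ^ 2 := by
  intro z
  -- summability of the two frame coefficient sequences
  have hsum : ∀ (w : ℕ → H), (∀ v : H, ∑' j, ‖⟪v, w j⟫_ℂ‖ ^ 2 = ‖v‖ ^ 2) →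
      Summable (fun j => ‖⟪z, w j⟫_ℂ‖ ^ 2) := by
    intro w hw
    by_cases hz : z = 0
    · simpa [hz] using summable_zero
    · by_contra h
      have h0 := tsum_eq_zero_of_not_summable h
      rw [hw z] at h0
      exact (pow_ne_zero 2 (norm_ne_zero_iff.mpr hz)) h0
  have hsx := hsum x hx
  have hsy := hsum y hy
  -- the cross term vanishes
  have h1 : HasSum (fun j => ⟪y j, z⟫_ℂ * ⟪z, x j⟫_ℂ) 0 := by
    have := (hd2 z).mapL (innerSL ℂ z)
    simpa [inner_smul_right] using this
  have hcross : HasSum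
      (fun j => (α * (starRingEnd ℂ) β * (⟪z, x j⟫_ℂ * (starRingEnd ℂ) ⟪z, y j⟫_ℂ)).re) 0 := by
    have h2 := (h1.mul_left (α * (starRingEnd ℂ) β)).mapL Complex.reCLM
    simp only [mul_zero, map_zero] at h2
    convert h2 using 2 with j
    rw [inner_conj_symm]
    simp only [Complex.reCLM_apply]
    ring_nf
  -- pointwise expansion
  have hterm : ∀ j, ‖⟪z, α • x j + β • y j⟫_ℂ‖ ^ 2
      = ‖α‖ ^ 2 * ‖⟪z, x j⟫_ℂ‖ ^ 2 + ‖β‖ ^ 2 * ‖⟪z, y j⟫_ℂ‖ ^ 2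
        + 2 * (α * (starRingEnd ℂ) β * (⟪z, x j⟫_ℂ * (starRingEnd ℂ) ⟪z, y j⟫_ℂ)).re := by
    intro j
    rw [inner_add_right, inner_smul_right, inner_smul_right,
      norm_add_sq_complex]
    rw [norm_mul, norm_mul, mul_pow, mul_pow]
    congr 2
    rw [map_mul]
    ring_nf
  have hX : HasSum (fun j => ‖α‖ ^ 2 * ‖⟪z, x j⟫_ℂ‖ ^ 2) (‖α‖ ^ 2 * ‖z‖ ^ 2) := by
    have := hsx.hasSum.mul_left (‖α‖ ^ 2)
    rwa [hx z] at this
  have hY : HasSum (fun j => ‖β‖ ^ 2 * ‖⟪z, y j⟫_ℂ‖ ^ 2) (‖β‖ ^ 2 * ‖z‖ ^ 2) := by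
    have := hsy.hasSum.mul_left (‖β‖ ^ 2)
    rwa [hy z] at this
  have htotal := (hX.add hY).add (hcross.mul_left 2)
  have : HasSum (fun j => ‖⟪z, α • x j + β • y j⟫_ℂ‖ ^ 2)
      (‖α‖ ^ 2 * ‖z‖ ^ 2 + ‖β‖ ^ 2 * ‖z‖ ^ 2 + 2 * 0) := by
    convert htotal using 1
    exact funext hterm
  rw [this.tsum_eq]
  rw [mul_zero, add_zero, ← add_mul, hαβ, one_mul]
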